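/- Let f be a Markov interval map and x ∈ E_f. For every pair (i,j) with a_{ij} = 1, the operator S_{ij} := T_i T_j T_j* on H_x is a nonzero partial isometry satisfying S_{ij}* S_{ij} = P_j and S_{ij} S_{ij}* ≤ P_i, where P_k := T_k T_k*. -/

import Mathlib

open scoped Classical ENNReal

noncomputable section

/-- Partition and branch data for a Markov interval map with `n` Markov
subintervals.  `cm j` is the point `c_j⁻` and `cp j` is `c_j⁺` (with
`cm 0 = cp 0 = c₀` and `cm n = cp n = c_n`).  `f` is the globally defined map,
`F j` is the branch of `f` on the `j`-th Markov interval (indexed by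
`j = 0, …, n-1`, corresponding to the interval `I_{j+1}` of the paper) and
`F' j` is the derivative of that branch. -/
structure MarkovSystem (n : ℕ) where
  cm : ℕ → ℝ
  cp : ℕ → ℝ
  f : ℝ → ℝ
  F : ℕ → ℝ → ℝ
  F' : ℕ → ℝ → ℝ
  two_le : 2 ≤ n
  cm_zero : cm 0 = cp 0
  cm_n : cm n = cp n
  cm_le_cp : ∀ j ≤ n, cm j ≤ cp j
  cp_lt_cm : ∀ j < n, cp j < cm (j + 1)

namespace MarkovSystem

variable {n : ℕ} (M : MarkovSystem n)

/-- The Markov interval `I_{j+1} = [c_j⁺, c_{j+1}⁻]` (for `j < n`). -/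
def Ipart (j : ℕ) : Set ℝ := Set.Icc (M.cp j) (M.cm (j + 1))

/-- The escape interval `E_j = (c_j⁻, c_j⁺)` (for `1 ≤ j ≤ n-1`). -/
def Epart (j : ℕ) : Set ℝ := Set.Ioo (M.cm j) (M.cp j)

/-- The ambient interval `I = [c₀, c_n]`. -/
def itv : Set ℝ := Set.Icc (M.cm 0) (M.cm n)

/-- The domain of `f`, namely `⋃_{j=1}^n I_j`. -/
def dom : Set ℝ := ⋃ j ∈ Finset.range n, M.Ipart j

/-- The set `Γ` of partition boundary points. -/
def Gamma : Set ℝ := {y | ∃ j ≤ n, y = M.cm j ∨ y = M.cp j}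

/-- `q`-fold image of a set under `f`, applying `f` only where it is defined. -/
def iterImage : ℕ → Set ℝ → Set ℝ
  | 0, S => S
  | q + 1, S => M.f '' (iterImage q S ∩ M.dom)

/-- `f^k(x)` is defined, i.e. all earlier iterates lie in the domain. -/
def definedUpTo (k : ℕ) (x : ℝ) : Prop := ∀ l < k, M.f^[l] x ∈ M.dom

/-- The orbit equivalence relation `R_f`. -/
def Rrel (x y : ℝ) : Prop :=
  ∃ p q : ℕ, M.definedUpTo p x ∧ M.definedUpTo q y ∧ M.f^[p] x = M.f^[q] y

/-- The generalized orbit `R_f(x)` of a point `x ∈ I`. -/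
def Rclass (x : ℝ) : Set ℝ := {y | y ∈ M.itv ∧ M.Rrel x y}

/-- The maximal invariant set `Ω_f`. -/
def Omega : Set ℝ := {x | x ∈ M.itv ∧ ∀ k, M.f^[k] x ∈ M.dom}

/-- The escape set `E_f = I \ Ω_f`. -/
def Esc : Set ℝ := M.itv \ M.Omega

/-- The regular set `Λ_f = Ω_f \ R_f(Γ)`. -/
def Lambda : Set ℝ := {x | x ∈ M.Omega ∧ ∀ γ ∈ M.Gamma, ¬ M.Rrel x γ}

/-- The escape time of a point of the escape set. -/
def tau (x : ℝ) : ℕ := sInf {k | M.f^[k] x ∉ M.dom}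

/-- The final escape point `e(x) = f^{τ(x)}(x)`. -/
def e (x : ℝ) : ℝ := M.f^[M.tau x] x

/-- The transition-matrix condition `a_{ij} = 1`, i.e. `f(int I_i) ⊇ int I_j`. -/
def trans (i j : ℕ) : Prop := interior (M.Ipart j) ⊆ M.F i '' interior (M.Ipart i)

/-- The escape-transition condition `â_{ik} = 1`, i.e. `int I_i ∩ f⁻¹(E_k) ≠ ∅`. -/
def ahat (i k : ℕ) : Prop := (interior (M.Ipart i) ∩ M.F i ⁻¹' M.Epart k).Nonempty

end MarkovSystem

/-- The defining properties (P1)-(P4) of a Markov interval map, together with the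
compatibility of the global map `f` with the branches `F j`:  `f` agrees with `F j`
on `I_j` except possibly at a boundary point shared with an adjacent interval,
where `f` is given by one of the two adjacent branches. -/
structure IsMarkov {n : ℕ} (M : MarkovSystem n) : Prop where
  compat₁ : ∀ j < n, ∀ x ∈ M.Ipart j, (∀ k < n, k ≠ j → x ∉ M.Ipart k) → M.f x = M.F j x
  compat₂ : ∀ x ∈ M.dom, ∃ j, j < n ∧ x ∈ M.Ipart j ∧ M.f x = M.F j x
  maps_into : ∀ j < n, M.F j '' M.Ipart j ⊆ M.itv
  onto : M.itv ⊆ ⋃ j ∈ Finset.range n, M.F j '' M.Ipart j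
  markov : ∀ i < n, ∃ S T : Set ℕ, S ⊆ {j | j < n} ∧ T ⊆ {j | 1 ≤ j ∧ j < n} ∧
    M.F i '' M.Ipart i = (⋃ j ∈ S, M.Ipart j) ∪ (⋃ j ∈ T, M.Epart j)
  deriv : ∀ i < n, ∀ x ∈ M.Ipart i, HasDerivWithinAt (M.F i) (M.F' i x) (M.Ipart i) x
  derivCont : ∀ i < n, ContinuousOn (M.F' i) (M.Ipart i)
  mono : ∀ i < n, StrictMonoOn (M.F i) (M.Ipart i) ∨ StrictAntiOn (M.F i) (M.Ipart i)
  expansive : ∃ b > 1, ∀ i < n, ∀ x ∈ M.Ipart i, b < |M.F' i x|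
  aperiodic : ∀ i < n, ∃ q, M.dom ⊆ M.iterImage q (M.Ipart i)

namespace MarkovSystem

variable {n : ℕ} (M : MarkovSystem n)

/-- The Hilbert space `H_x = ℓ²(R_f(x))`. -/
abbrev Hsp (x : ℝ) : Type _ := lp (fun _ : M.Rclass x => ℂ) 2

/-- The canonical orthonormal basis vector `δ_z` of `H_x`, for `z ∈ R_f(x)`. -/
def dvec {x : ℝ} (z : M.Rclass x) : M.Hsp x := lp.single 2 z 1

/-- `T` is the bounded operator `T_i` on `H_x`, determined on the basis by
`T_i δ_y = δ_{(f|_{I_i})⁻¹(y)}` if `y ∈ f(I_i)` and `T_i δ_y = 0` otherwise. -/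
def IsBranchOp (x : ℝ) (i : ℕ) (T : M.Hsp x →L[ℂ] M.Hsp x) : Prop :=
  (∀ z w : M.Rclass x, (w : ℝ) ∈ M.Ipart i → M.F i w = (z : ℝ) →
      T (M.dvec z) = M.dvec w) ∧
  (∀ z : M.Rclass x, (z : ℝ) ∉ M.F i '' M.Ipart i → T (M.dvec z) = 0)

/-- `Pe` is the rank-one orthogonal projection onto `ℂ δ_{e(x)}`. -/
def IsEscProj (x : ℝ) (Pe : M.Hsp x →L[ℂ] M.Hsp x) : Prop :=
  ∀ z : M.Rclass x, Pe (M.dvec z) = if (z : ℝ) = M.e x then M.dvec z else 0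

end MarkovSystem

section Aux

open Set Function

variable {n : ℕ} {M : MarkovSystem n}

lemma MIM_cp_le_cm : ∀ k ≤ n, ∀ j < k, M.cp j ≤ M.cm k := by
  intro k
  induction k with
  | zero => intro _ j hj; omega
  | succ k ih =>
    intro hk j hj
    rcases Nat.lt_succ_iff_lt_or_eq.mp hj with h | h
    · exact le_trans (le_trans (ih (by omega) j h) (M.cm_le_cp k (by omega)))
        (le_of_lt (M.cp_lt_cm k (by omega)))
    · subst h; exact le_of_lt (M.cp_lt_cm j (by omega))

lemma MIM_cm_mono {j k : ℕ} (h : j ≤ k) (hk : k ≤ n) : M.cm j ≤ M.cm k := by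
  rcases eq_or_lt_of_le h with rfl | h
  · exact le_rfl
  · exact le_trans (M.cm_le_cp j (by omega)) (MIM_cp_le_cm k hk j h)

lemma MIM_cp_mono {j k : ℕ} (h : j ≤ k) (hk : k ≤ n) : M.cp j ≤ M.cp k := by
  rcases eq_or_lt_of_le h with rfl | h
  · exact le_rfl
  · exact le_trans (MIM_cp_le_cm k hk j h) (M.cm_le_cp k hk)

lemma MIM_Ipart_subset_itv {j : ℕ} (hj : j < n) : M.Ipart j ⊆ M.itv := by
  intro y hy
  constructor
  · exact le_trans (le_trans (le_of_eq M.cm_zero) (MIM_cp_mono (Nat.zero_le j) (le_of_lt hj)))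
      hy.1
  · exact le_trans hy.2 (MIM_cm_mono (by omega) le_rfl)

lemma MIM_Ipart_subset_dom {j : ℕ} (hj : j < n) : M.Ipart j ⊆ M.dom := by
  intro y hy
  exact Set.mem_iUnion₂.mpr ⟨j, Finset.mem_range.mpr hj, hy⟩

lemma MIM_Ipart_nonempty {j : ℕ} (hj : j < n) : M.cp j ≤ M.cm (j + 1) :=
  le_of_lt (M.cp_lt_cm j hj)

lemma MIM_gamma_cm {l : ℕ} (hl : l ≤ n) : M.cm l ∈ M.Gamma := ⟨l, hl, Or.inl rfl⟩

lemma MIM_gamma_cp {l : ℕ} (hl : l ≤ n) : M.cp l ∈ M.Gamma := ⟨l, hl, Or.inr rfl⟩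

lemma MIM_gamma_not_mem_Ioo {m : ℕ} {γ : ℝ} (hm : m < n) (hγ : γ ∈ M.Gamma) :
    γ ∉ Set.Ioo (M.cp m) (M.cm (m + 1)) := by
  obtain ⟨l, hl, h | h⟩ := hγ <;> subst h <;> intro hmem
  · rcases le_or_gt l m with h' | h'
    · exact absurd hmem.1 (not_lt.mpr (le_trans (M.cm_le_cp l (le_trans h' (le_of_lt hm)))
        (MIM_cp_mono h' (le_of_lt hm))))
    · exact absurd hmem.2 (not_lt.mpr (MIM_cm_mono h' hl))
  · rcases le_or_gt l m with h' | h'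
    · exact absurd hmem.1 (not_lt.mpr (MIM_cp_mono h' (le_of_lt hm)))
    · exact absurd hmem.2 (not_lt.mpr (le_trans (MIM_cm_mono h' hl) (M.cm_le_cp l hl)))

lemma MIM_gamma_endpoints {m : ℕ} {γ : ℝ} (hm : m < n) (hγ : γ ∈ M.Gamma)
    (h : γ ∈ M.Ipart m) : γ = M.cp m ∨ γ = M.cm (m + 1) := by
  rcases eq_or_lt_of_le h.1 with h1 | h1
  · exact Or.inl h1.symm
  rcases eq_or_lt_of_le h.2 with h2 | h2
  · exact Or.inr h2
  exact absurd ⟨h1, h2⟩ (MIM_gamma_not_mem_Ioo hm hγ)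

lemma MIM_gamma_subset_dom : M.Gamma ⊆ M.dom := by
  have h2n : 2 ≤ n := M.two_le
  rintro γ ⟨l, hl, h | h⟩ <;> subst h
  · rcases Nat.eq_zero_or_pos l with rfl | hpos
    · exact MIM_Ipart_subset_dom (by omega)
        ⟨le_of_eq M.cm_zero.symm, le_trans (le_of_eq M.cm_zero)
          (MIM_Ipart_nonempty (by omega))⟩
    · refine MIM_Ipart_subset_dom (j := l - 1) (by omega) ⟨?_, ?_⟩
      · exact MIM_cp_le_cm (M := M) l hl (l - 1) (by omega)
      · have h' : l - 1 + 1 = l := by omega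
        rw [h']
  · rcases Nat.lt_or_ge l n with hln | hln
    · exact MIM_Ipart_subset_dom hln ⟨le_rfl, MIM_Ipart_nonempty hln⟩
    · have hln' : l = n := by omega
      rw [hln']
      refine MIM_Ipart_subset_dom (j := n - 1) (by omega) ⟨?_, ?_⟩
      · rw [← M.cm_n]
        have h' : n - 1 + 1 = n := by omega
        calc M.cp (n - 1) ≤ M.cm (n - 1 + 1) := MIM_Ipart_nonempty (by omega)
          _ = M.cm n := by rw [h']
      · rw [← M.cm_n]
        have h' : n - 1 + 1 = n := by omega
        rw [h']

lemma MIM_Ipart_inter {j k : ℕ} {w : ℝ} (hj : j < n) (hk : k < n) (hne : j ≠ k)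
    (h1 : w ∈ M.Ipart j) (h2 : w ∈ M.Ipart k) :
    w ∈ M.Gamma ∧ (w = M.cp j ∨ w = M.cm (j + 1)) := by
  rcases Nat.lt_or_ge j k with h | h
  · have hchain : M.cm (j + 1) ≤ M.cp k := by
      rcases Nat.lt_or_ge (j + 1) k with h' | h'
      · exact le_trans (M.cm_le_cp (j+1) (by omega)) (MIM_cp_mono (by omega) (le_of_lt hk))
      · have he : j + 1 = k := by omega
        rw [← he]; exact M.cm_le_cp (j+1) (by omega)
    have : w = M.cm (j + 1) := le_antisymm h1.2 (le_trans hchain h2.1)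
    exact ⟨this ▸ MIM_gamma_cm (by omega), Or.inr this⟩
  · have h' : k < j := lt_of_le_of_ne h (Ne.symm hne)
    have hchain : M.cm (k + 1) ≤ M.cp j := by
      rcases Nat.lt_or_ge (k + 1) j with h'' | h''
      · exact le_trans (M.cm_le_cp (k+1) (by omega)) (MIM_cp_mono (by omega) (le_of_lt hj))
      · have he : k + 1 = j := by omega
        rw [← he]; exact M.cm_le_cp (k+1) (by omega)
    have : w = M.cp j := le_antisymm (le_trans h2.2 hchain) h1.1
    exact ⟨this ▸ MIM_gamma_cp (le_of_lt hj), Or.inl this⟩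

lemma MIM_contOn (hM : IsMarkov M) {m : ℕ} (hm : m < n) :
    ContinuousOn (M.F m) (M.Ipart m) :=
  fun y hy => (hM.deriv m hm y hy).continuousWithinAt

lemma MIM_injOn (hM : IsMarkov M) {m : ℕ} (hm : m < n) :
    Set.InjOn (M.F m) (M.Ipart m) := by
  rcases hM.mono m hm with h | h
  · exact h.injOn
  · exact h.injOn

lemma MIM_Icc_endpoints_gamma (hM : IsMarkov M) {m : ℕ} (hm : m < n) {A B : ℝ}
    (hIcc : M.F m '' M.Ipart m = Set.Icc A B) : A ∈ M.Gamma ∧ B ∈ M.Gamma := by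
  have hab : M.cp m ≤ M.cm (m + 1) := MIM_Ipart_nonempty hm
  have hne : (M.F m '' M.Ipart m).Nonempty :=
    ⟨M.F m (M.cp m), Set.mem_image_of_mem _ (Set.left_mem_Icc.mpr hab)⟩
  have hAB : A ≤ B := by
    rw [hIcc] at hne; exact Set.nonempty_Icc.mp hne
  obtain ⟨S, Tt, hS, hTt, hU⟩ := hM.markov m hm
  constructor
  · have hA : A ∈ M.F m '' M.Ipart m := by rw [hIcc]; exact Set.left_mem_Icc.mpr hAB
    rw [hU] at hA
    rcases hA with hA | hA
    · obtain ⟨s, hs, hAs⟩ := Set.mem_iUnion₂.mp hA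
      have hsn : s < n := hS hs
      have hcp : M.cp s ∈ M.F m '' M.Ipart m := by
        rw [hU]
        exact Or.inl (Set.mem_iUnion₂.mpr ⟨s, hs, Set.left_mem_Icc.mpr (MIM_Ipart_nonempty hsn)⟩)
      rw [hIcc] at hcp
      have : A = M.cp s := le_antisymm hcp.1 hAs.1
      exact this ▸ MIM_gamma_cp (le_of_lt hsn)
    · obtain ⟨t, ht, hAt⟩ := Set.mem_iUnion₂.mp hA
      obtain ⟨y, hy1, hy2⟩ := exists_between hAt.1
      have hyU : y ∈ M.F m '' M.Ipart m := by
        rw [hU]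
        exact Or.inr (Set.mem_iUnion₂.mpr ⟨t, ht, ⟨hy1, lt_trans hy2 hAt.2⟩⟩)
      rw [hIcc] at hyU
      exact absurd hyU.1 (not_le.mpr hy2)
  · have hB : B ∈ M.F m '' M.Ipart m := by rw [hIcc]; exact Set.right_mem_Icc.mpr hAB
    rw [hU] at hB
    rcases hB with hB | hB
    · obtain ⟨s, hs, hBs⟩ := Set.mem_iUnion₂.mp hB
      have hsn : s < n := hS hs
      have hcm : M.cm (s + 1) ∈ M.F m '' M.Ipart m := by
        rw [hU]
        exact Or.inl (Set.mem_iUnion₂.mpr ⟨s, hs, Set.right_mem_Icc.mpr (MIM_Ipart_nonempty hsn)⟩)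
      rw [hIcc] at hcm
      have : B = M.cm (s + 1) := le_antisymm hBs.2 hcm.2
      exact this ▸ MIM_gamma_cm (by omega)
    · obtain ⟨t, ht, hBt⟩ := Set.mem_iUnion₂.mp hB
      obtain ⟨y, hy1, hy2⟩ := exists_between hBt.2
      have hyU : y ∈ M.F m '' M.Ipart m := by
        rw [hU]
        exact Or.inr (Set.mem_iUnion₂.mpr ⟨t, ht, ⟨lt_trans hBt.1 hy1, hy2⟩⟩)
      rw [hIcc] at hyU
      exact absurd hyU.2 (not_le.mpr hy1)

lemma MIM_image_Icc (hM : IsMarkov M) {m : ℕ} (hm : m < n) :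
    M.F m '' M.Ipart m = Set.Icc (M.F m (M.cp m)) (M.F m (M.cm (m + 1))) ∨
    M.F m '' M.Ipart m = Set.Icc (M.F m (M.cm (m + 1))) (M.F m (M.cp m)) := by
  have hab : M.cp m ≤ M.cm (m + 1) := MIM_Ipart_nonempty hm
  have hcont := MIM_contOn hM hm
  rcases hM.mono m hm with hmono | hanti
  · left
    apply Set.Subset.antisymm
    · rintro _ ⟨t, ht, rfl⟩
      exact ⟨hmono.monotoneOn (Set.left_mem_Icc.mpr hab) ht ht.1,
        hmono.monotoneOn ht (Set.right_mem_Icc.mpr hab) ht.2⟩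
    · exact intermediate_value_Icc hab hcont
  · right
    apply Set.Subset.antisymm
    · rintro _ ⟨t, ht, rfl⟩
      exact ⟨hanti.antitoneOn ht (Set.right_mem_Icc.mpr hab) ht.2,
        hanti.antitoneOn (Set.left_mem_Icc.mpr hab) ht ht.1⟩
    · exact intermediate_value_Icc' hab hcont

lemma MIM_image_endpoints_gamma (hM : IsMarkov M) {m : ℕ} (hm : m < n) :
    M.F m (M.cp m) ∈ M.Gamma ∧ M.F m (M.cm (m + 1)) ∈ M.Gamma := by
  rcases MIM_image_Icc hM hm with h | h
  · exact MIM_Icc_endpoints_gamma hM hm h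
  · exact (MIM_Icc_endpoints_gamma hM hm h).symm

lemma MIM_gamma_iter (hM : IsMarkov M) {γ : ℝ} (hγ : γ ∈ M.Gamma) :
    ∀ k, M.f^[k] γ ∈ M.Gamma ∧ M.f^[k] γ ∈ M.dom := by
  intro k
  induction k with
  | zero => exact ⟨hγ, MIM_gamma_subset_dom hγ⟩
  | succ k ih =>
    obtain ⟨hΓ, hd⟩ := ih
    obtain ⟨m, hm, hI, hf⟩ := hM.compat₂ _ hd
    have hend := MIM_gamma_endpoints hm hΓ hI
    have hnext : M.f (M.f^[k] γ) ∈ M.Gamma := by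
      rw [hf]
      rcases hend with h | h <;> rw [h]
      · exact (MIM_image_endpoints_gamma hM hm).1
      · exact (MIM_image_endpoints_gamma hM hm).2
    rw [Function.iterate_succ_apply']
    exact ⟨hnext, MIM_gamma_subset_dom hnext⟩

lemma MIM_rrel_refl (x : ℝ) : M.Rrel x x :=
  ⟨0, 0, fun l hl => absurd hl (by omega), fun l hl => absurd hl (by omega), rfl⟩

lemma MIM_rrel_symm {x y : ℝ} (h : M.Rrel x y) : M.Rrel y x := by
  obtain ⟨p, q, hp, hq, he⟩ := h
  exact ⟨q, p, hq, hp, he.symm⟩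

lemma MIM_rrel_trans {x y z : ℝ} (h1 : M.Rrel x y) (h2 : M.Rrel y z) : M.Rrel x z := by
  obtain ⟨p₁, q₁, hp₁, hq₁, e₁⟩ := h1
  obtain ⟨p₂, q₂, hp₂, hq₂, e₂⟩ := h2
  rcases le_or_gt q₁ p₂ with hle | hlt
  · refine ⟨p₁ + (p₂ - q₁), q₂, ?_, hq₂, ?_⟩
    · intro l hl
      rcases Nat.lt_or_ge l p₁ with h | h
      · exact hp₁ l h
      · have h1 : M.f^[l - p₁ + p₁] x = M.f^[l - p₁ + q₁] y := by
          rw [Function.iterate_add_apply, e₁, ← Function.iterate_add_apply]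
        have h2 : l - p₁ + p₁ = l := by omega
        rw [h2] at h1
        rw [h1]
        exact hp₂ _ (by omega)
    · have hsplit : p₁ + (p₂ - q₁) = (p₂ - q₁) + p₁ := by omega
      rw [hsplit, Function.iterate_add_apply, e₁, ← Function.iterate_add_apply]
      have : p₂ - q₁ + q₁ = p₂ := by omega
      rw [this, e₂]
  · refine ⟨p₁, q₂ + (q₁ - p₂), hp₁, ?_, ?_⟩
    · intro l hl
      rcases Nat.lt_or_ge l q₂ with h | h
      · exact hq₂ l h
      · have h1 : M.f^[l - q₂ + q₂] z = M.f^[l - q₂ + p₂] y := by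
          rw [Function.iterate_add_apply, ← e₂, ← Function.iterate_add_apply]
        have h2 : l - q₂ + q₂ = l := by omega
        rw [h2] at h1
        rw [h1]
        exact hq₁ _ (by omega)
    · have hsplit : q₂ + (q₁ - p₂) = (q₁ - p₂) + q₂ := by omega
      rw [e₁, hsplit, Function.iterate_add_apply, ← e₂, ← Function.iterate_add_apply]
      have : q₁ - p₂ + p₂ = q₁ := by omega
      rw [this]

lemma MIM_rrel_step {y : ℝ} (hy : y ∈ M.dom) : M.Rrel y (M.f y) := by
  refine ⟨1, 0, ?_, fun l hl => absurd hl (by omega), rfl⟩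
  intro l hl
  have : l = 0 := by omega
  rw [this]
  exact hy

lemma MIM_esc_exists {x : ℝ} (hx : x ∈ M.Esc) : ∃ k, M.f^[k] x ∉ M.dom := by
  by_contra h
  push_neg at h
  exact hx.2 ⟨hx.1, h⟩

lemma MIM_class_escapes {x : ℝ} (hx : x ∈ M.Esc) {z : ℝ} (hz : M.Rrel x z) :
    ∃ k, M.f^[k] z ∉ M.dom := by
  obtain ⟨p, q, hp, hq, he⟩ := hz
  have hex := MIM_esc_exists hx
  set k₀ := Nat.find hex with hk₀
  have hspec : M.f^[k₀] x ∉ M.dom := Nat.find_spec hex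
  have hpk : p ≤ k₀ := by
    by_contra h
    exact hspec (hp k₀ (by omega))
  refine ⟨(k₀ - p) + q, ?_⟩
  rw [Function.iterate_add_apply, ← he, ← Function.iterate_add_apply]
  have : k₀ - p + p = k₀ := by omega
  rw [this]
  exact hspec

lemma MIM_class_not_gamma (hM : IsMarkov M) {x : ℝ} (hx : x ∈ M.Esc) {z : ℝ}
    (hz : M.Rrel x z) : z ∉ M.Gamma := by
  intro hγ
  obtain ⟨k, hk⟩ := MIM_class_escapes hx hz
  exact hk (MIM_gamma_iter hM hγ k).2

lemma MIM_class_apply (hM : IsMarkov M) {x : ℝ} (hx : x ∈ M.Esc) {z : ℝ}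
    (hz : z ∈ M.Rclass x) {m : ℕ} (hm : m < n) (hzI : z ∈ M.Ipart m) :
    M.f z = M.F m z ∧ M.F m z ∈ M.Rclass x := by
  have hzd : z ∈ M.dom := MIM_Ipart_subset_dom hm hzI
  obtain ⟨m', hm', hzI', hf⟩ := hM.compat₂ z hzd
  have hmm : m' = m := by
    by_contra h
    exact (MIM_class_not_gamma hM hx hz.2) (MIM_Ipart_inter hm' hm h hzI' hzI).1
  subst hmm
  refine ⟨hf, ?_, ?_⟩
  · exact hM.maps_into m' hm' ⟨z, hzI, rfl⟩
  · exact hf ▸ MIM_rrel_trans hz.2 (MIM_rrel_step hzd)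

lemma MIM_class_preimage (hM : IsMarkov M) {x : ℝ} (hx : x ∈ M.Esc) {z : ℝ}
    (hz : z ∈ M.Rclass x) {m : ℕ} (hm : m < n) {w : ℝ} (hw : w ∈ M.Ipart m)
    (hFw : M.F m w = z) : w ∈ M.Rclass x ∧ M.f w = z := by
  by_cases hiso : ∀ k < n, k ≠ m → w ∉ M.Ipart k
  · have hfw : M.f w = M.F m w := hM.compat₁ m hm w hw hiso
    have hwd : w ∈ M.dom := MIM_Ipart_subset_dom hm hw
    have hrel : M.Rrel x w := by
      apply MIM_rrel_trans hz.2
      apply MIM_rrel_symm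
      have := MIM_rrel_step (M := M) hwd
      rwa [hfw, hFw] at this
    exact ⟨⟨MIM_Ipart_subset_itv hm hw, hrel⟩, hfw.trans hFw⟩
  · exfalso
    push_neg at hiso
    obtain ⟨k, hk, hkm, hwk⟩ := hiso
    have hend := (MIM_Ipart_inter hm hk (fun h => hkm h.symm) hw hwk).2
    apply MIM_class_not_gamma hM hx hz.2
    rw [← hFw]
    rcases hend with h | h <;> rw [h]
    · exact (MIM_image_endpoints_gamma hM hm).1
    · exact (MIM_image_endpoints_gamma hM hm).2

lemma MIM_class_interior (hM : IsMarkov M) {x : ℝ} (hx : x ∈ M.Esc) {z : ℝ}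
    (hz : z ∈ M.Rclass x) {m : ℕ} (hm : m < n) (hzI : z ∈ M.Ipart m) :
    z ∈ Set.Ioo (M.cp m) (M.cm (m + 1)) := by
  have hng := MIM_class_not_gamma hM hx hz.2
  constructor
  · rcases eq_or_lt_of_le hzI.1 with h | h
    · exact absurd (h ▸ MIM_gamma_cp (le_of_lt hm)) hng
    · exact h
  · rcases eq_or_lt_of_le hzI.2 with h | h
    · exact absurd (h ▸ MIM_gamma_cm (by omega)) hng
    · exact h

lemma MIM_iterImage_rec :
    ∀ (q : ℕ) (S : Set ℝ) (y : ℝ), y ∈ M.iterImage q S →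
      ∃ u ∈ S, M.definedUpTo q u ∧ M.f^[q] u = y := by
  intro q
  induction q with
  | zero =>
    intro S y hy
    exact ⟨y, hy, fun l hl => absurd hl (by omega), rfl⟩
  | succ q ih =>
    intro S y hy
    obtain ⟨y', ⟨hy'i, hy'd⟩, rfl⟩ := hy
    obtain ⟨u, huS, hud, hqu⟩ := ih S y' hy'i
    refine ⟨u, huS, ?_, ?_⟩
    · intro l hl
      rcases Nat.lt_or_ge l q with h | h
      · exact hud l h
      · have : l = q := by omega
        rw [this, hqu]
        exact hy'd
    · rw [Function.iterate_succ_apply', hqu]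

lemma MIM_exists_class_in_Ipart (hM : IsMarkov M) {x : ℝ} (hx : x ∈ M.Esc)
    {j : ℕ} (hj : j < n) : ∃ u, u ∈ M.Rclass x ∧ u ∈ M.Ipart j := by
  have hxc : x ∈ M.Rclass x := ⟨hx.1, MIM_rrel_refl x⟩
  have step1 : ∃ y, y ∈ M.Rclass x ∧ y ∈ M.dom := by
    by_cases hxd : x ∈ M.dom
    · exact ⟨x, hxc, hxd⟩
    · obtain ⟨m, hm', ⟨w, hwI, hFw⟩⟩ := Set.mem_iUnion₂.mp (hM.onto hx.1)
      have hm : m < n := Finset.mem_range.mp hm'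
      exact ⟨w, (MIM_class_preimage hM hx hxc hm hwI hFw).1, MIM_Ipart_subset_dom hm hwI⟩
  obtain ⟨y, hyc, hyd⟩ := step1
  obtain ⟨q, hq⟩ := hM.aperiodic j hj
  obtain ⟨u, huI, hud, hqu⟩ := MIM_iterImage_rec q (M.Ipart j) y (hq hyd)
  refine ⟨u, ⟨MIM_Ipart_subset_itv hj huI, ?_⟩, huI⟩
  apply MIM_rrel_trans hyc.2
  exact ⟨0, q, fun l hl => absurd hl (by omega), hud, hqu.symm⟩

end Aux

/-- For `x ∈ E_f` and each pair `(i,j)` with `a_{ij} = 1`, the operator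
`S_{ij} = T_i T_j T_j*` is a nonzero partial isometry with
`S_{ij}* S_{ij} = P_j` and `S_{ij} S_{ij}* ≤ P_i`. -/
theorem Sij_partial_isometry {n : ℕ} (M : MarkovSystem n) (hM : IsMarkov M)
    {x : ℝ} (hx : x ∈ M.Esc)
    (T : ℕ → (M.Hsp x →L[ℂ] M.Hsp x)) (hT : ∀ i < n, M.IsBranchOp x i (T i))
    {i j : ℕ} (hi : i < n) (hj : j < n) (hij : M.trans i j) :
    T i * (T j * star (T j)) ≠ 0 ∧
    (T i * (T j * star (T j))) * star (T i * (T j * star (T j))) *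
        (T i * (T j * star (T j))) = T i * (T j * star (T j)) ∧
    star (T i * (T j * star (T j))) * (T i * (T j * star (T j))) =
      T j * star (T j) ∧
    (T i * star (T i) -
      (T i * (T j * star (T j))) * star (T i * (T j * star (T j)))).IsPositive := by
  classical
  -- coordinate of a vector equals inner product with the basis vector
  have inner_dvec : ∀ (u : M.Rclass x) (v : M.Hsp x), (inner ℂ (M.dvec u) v : ℂ) = v u := by
    intro u v
    simp only [MarkovSystem.dvec]
    rw [lp.inner_single_left]
    simp [RCLike.inner_apply]
  have dvec_apply_self : ∀ z : M.Rclass x, (M.dvec z) z = 1 := fun z =>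
    lp.single_apply_self 2 z 1
  have dvec_apply_ne : ∀ (z q : M.Rclass x), q ≠ z → (M.dvec z) q = 0 := fun z q h =>
    lp.single_apply_ne 2 z 1 h
  have zero_apply : ∀ u : M.Rclass x, (0 : M.Hsp x) u = 0 := fun u => by
    rw [lp.coeFn_zero]; rfl
  -- action of T on basis vectors
  have T_dvec_pos : ∀ m, m < n → ∀ z w : M.Rclass x, (w : ℝ) ∈ M.Ipart m →
      M.F m w = (z : ℝ) → T m (M.dvec z) = M.dvec w := fun m hm => (hT m hm).1
  have T_dvec_neg : ∀ m, m < n → ∀ z : M.Rclass x, (z : ℝ) ∉ M.F m '' M.Ipart m →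
      T m (M.dvec z) = 0 := fun m hm => (hT m hm).2
  -- adjoint applied pointwise
  have adj_apply_pos : ∀ m, m < n → ∀ (v : M.Hsp x) (u w : M.Rclass x),
      (w : ℝ) ∈ M.Ipart m → M.F m ↑w = ↑u → (star (T m) v) u = v w := by
    intro m hm v u w hw hFw
    rw [← inner_dvec u (star (T m) v), ContinuousLinearMap.star_eq_adjoint,
      ContinuousLinearMap.adjoint_inner_right, T_dvec_pos m hm u w hw hFw]
    exact inner_dvec w v
  have adj_apply_neg : ∀ m, m < n → ∀ (v : M.Hsp x) (u : M.Rclass x),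
      (u : ℝ) ∉ M.F m '' M.Ipart m → (star (T m) v) u = 0 := by
    intro m hm v u hu
    rw [← inner_dvec u (star (T m) v), ContinuousLinearMap.star_eq_adjoint,
      ContinuousLinearMap.adjoint_inner_right, T_dvec_neg m hm u hu]
    exact inner_zero_left _
  -- adjoint on basis vectors
  have adj_dvec_pos : ∀ m, m < n → ∀ (u w : M.Rclass x), (u : ℝ) ∈ M.Ipart m →
      (w : ℝ) = M.F m ↑u → star (T m) (M.dvec u) = M.dvec w := by
    intro m hm u w hu hw
    refine lp.ext (funext fun q => ?_)
    by_cases hq : (q : ℝ) ∈ M.F m '' M.Ipart m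
    · obtain ⟨w', hw', hFw'⟩ := hq
      have hw'c : w' ∈ M.Rclass x := (MIM_class_preimage hM hx q.2 hm hw' hFw').1
      rw [adj_apply_pos m hm (M.dvec u) q ⟨w', hw'c⟩ hw' hFw']
      by_cases he : (⟨w', hw'c⟩ : M.Rclass x) = u
      · have hqw : q = w := by
          apply Subtype.ext
          have : w' = (u : ℝ) := congrArg Subtype.val he
          rw [hw, ← hFw', this]
        rw [he, hqw, dvec_apply_self, dvec_apply_self]
      · rw [dvec_apply_ne u ⟨w', hw'c⟩ he]
        have hqw : q ≠ w := by
          intro hqw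
          apply he
          apply Subtype.ext
          have h1 : (q : ℝ) = M.F m ↑u := by rw [hqw, hw]
          exact MIM_injOn hM hm hw' hu (hFw'.trans h1)
        rw [dvec_apply_ne w q hqw]
    · rw [adj_apply_neg m hm _ q hq]
      have hqw : q ≠ w := by
        intro hqw
        exact hq (by rw [hqw, hw]; exact ⟨u, hu, rfl⟩)
      rw [dvec_apply_ne w q hqw]
  have adj_dvec_neg : ∀ m, m < n → ∀ u : M.Rclass x, (u : ℝ) ∉ M.Ipart m →
      star (T m) (M.dvec u) = 0 := by
    intro m hm u hu
    refine lp.ext (funext fun q => ?_)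
    by_cases hq : (q : ℝ) ∈ M.F m '' M.Ipart m
    · obtain ⟨w', hw', hFw'⟩ := hq
      have hw'c : w' ∈ M.Rclass x := (MIM_class_preimage hM hx q.2 hm hw' hFw').1
      rw [adj_apply_pos m hm (M.dvec u) q ⟨w', hw'c⟩ hw' hFw']
      have hne : (⟨w', hw'c⟩ : M.Rclass x) ≠ u := by
        intro he
        apply hu
        have : w' = (u : ℝ) := congrArg Subtype.val he
        rw [← this]
        exact hw'
      rw [dvec_apply_ne u _ hne, zero_apply]
    · rw [adj_apply_neg m hm _ q hq, zero_apply]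
  -- T applied pointwise
  have T_apply_pos : ∀ m, m < n → ∀ (v : M.Hsp x) (u uF : M.Rclass x),
      (u : ℝ) ∈ M.Ipart m → (uF : ℝ) = M.F m ↑u → (T m v) u = v uF := by
    intro m hm v u uF hu huF
    rw [← inner_dvec u (T m v), ← ContinuousLinearMap.adjoint_inner_left,
      ← ContinuousLinearMap.star_eq_adjoint, adj_dvec_pos m hm u uF hu huF]
    exact inner_dvec uF v
  have T_apply_neg : ∀ m, m < n → ∀ (v : M.Hsp x) (u : M.Rclass x),
      (u : ℝ) ∉ M.Ipart m → (T m v) u = 0 := by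
    intro m hm v u hu
    rw [← inner_dvec u (T m v), ← ContinuousLinearMap.adjoint_inner_left,
      ← ContinuousLinearMap.star_eq_adjoint, adj_dvec_neg m hm u hu]
    exact inner_zero_left _
  -- diagonal formula for the projections P_m = T_m T_m*
  have P_apply_pos : ∀ m, m < n → ∀ (v : M.Hsp x) (u : M.Rclass x), (u : ℝ) ∈ M.Ipart m →
      ((T m * star (T m)) v) u = v u := by
    intro m hm v u hu
    rw [ContinuousLinearMap.mul_apply]
    have huF : M.F m ↑u ∈ M.Rclass x := (MIM_class_apply hM hx u.2 hm hu).2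
    rw [T_apply_pos m hm _ u ⟨M.F m ↑u, huF⟩ hu rfl]
    exact adj_apply_pos m hm v ⟨M.F m ↑u, huF⟩ u hu rfl
  have P_apply_neg : ∀ m, m < n → ∀ (v : M.Hsp x) (u : M.Rclass x), (u : ℝ) ∉ M.Ipart m →
      ((T m * star (T m)) v) u = 0 := by
    intro m hm v u hu
    rw [ContinuousLinearMap.mul_apply]
    exact T_apply_neg m hm _ u hu
  -- membership of class points of I_j in the image of the i-th branch
  have class_in_image : ∀ u : M.Rclass x, (u : ℝ) ∈ M.Ipart j →
      (u : ℝ) ∈ M.F i '' M.Ipart i := by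
    intro u hu
    have hio := MIM_class_interior hM hx u.2 hj hu
    have hmem : (u : ℝ) ∈ interior (M.Ipart j) := by
      rw [MarkovSystem.Ipart, interior_Icc]; exact hio
    exact (Set.image_mono interior_subset) (hij hmem)
  set S : M.Hsp x →L[ℂ] M.Hsp x := T i * (T j * star (T j)) with hSdef
  have hSstar : star S = (T j * star (T j)) * star (T i) := by
    rw [hSdef, star_mul, star_mul, star_star]
  have hPj_idem : (T j * star (T j)) * (T j * star (T j)) = T j * star (T j) := by
    refine ContinuousLinearMap.ext fun v => ?_
    refine lp.ext (funext fun u => ?_)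
    rw [ContinuousLinearMap.mul_apply]
    by_cases hu : (u : ℝ) ∈ M.Ipart j
    · rw [P_apply_pos j hj _ u hu, P_apply_pos j hj v u hu]
    · rw [P_apply_neg j hj _ u hu, P_apply_neg j hj v u hu]
  have hPi_idem : (T i * star (T i)) * (T i * star (T i)) = T i * star (T i) := by
    refine ContinuousLinearMap.ext fun v => ?_
    refine lp.ext (funext fun u => ?_)
    rw [ContinuousLinearMap.mul_apply]
    by_cases hu : (u : ℝ) ∈ M.Ipart i
    · rw [P_apply_pos i hi _ u hu, P_apply_pos i hi v u hu]
    · rw [P_apply_neg i hi _ u hu, P_apply_neg i hi v u hu]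
  -- the key identity S* S = P_j
  have hc : star S * S = T j * star (T j) := by
    refine ContinuousLinearMap.ext fun v => ?_
    refine lp.ext (funext fun u => ?_)
    rw [ContinuousLinearMap.mul_apply, hSstar, ContinuousLinearMap.mul_apply]
    by_cases hu : (u : ℝ) ∈ M.Ipart j
    · rw [P_apply_pos j hj _ u hu, P_apply_pos j hj v u hu]
      obtain ⟨w, hwI, hFw⟩ := class_in_image u hu
      have hwc : w ∈ M.Rclass x := (MIM_class_preimage hM hx u.2 hi hwI hFw).1
      rw [adj_apply_pos i hi (S v) u ⟨w, hwc⟩ hwI hFw]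
      rw [hSdef, ContinuousLinearMap.mul_apply]
      rw [T_apply_pos i hi _ ⟨w, hwc⟩ u hwI hFw.symm]
      exact P_apply_pos j hj v u hu
    · rw [P_apply_neg j hj _ u hu, P_apply_neg j hj v u hu]
  -- diagonal formula for S S*
  have hD_pos : ∀ (v : M.Hsp x) (u : M.Rclass x), (u : ℝ) ∈ M.Ipart i →
      M.F i ↑u ∈ M.Ipart j → ((S * star S) v) u = v u := by
    intro v u hu hF
    have huF : M.F i ↑u ∈ M.Rclass x := (MIM_class_apply hM hx u.2 hi hu).2
    rw [ContinuousLinearMap.mul_apply, hSdef, ContinuousLinearMap.mul_apply]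
    rw [T_apply_pos i hi _ u ⟨M.F i ↑u, huF⟩ hu rfl]
    rw [P_apply_pos j hj _ ⟨M.F i ↑u, huF⟩ hF]
    rw [hSstar, ContinuousLinearMap.mul_apply]
    rw [P_apply_pos j hj _ ⟨M.F i ↑u, huF⟩ hF]
    exact adj_apply_pos i hi v ⟨M.F i ↑u, huF⟩ u hu rfl
  have hD_neg : ∀ (v : M.Hsp x) (u : M.Rclass x),
      ¬((u : ℝ) ∈ M.Ipart i ∧ M.F i ↑u ∈ M.Ipart j) → ((S * star S) v) u = 0 := by
    intro v u hcond
    rw [ContinuousLinearMap.mul_apply, hSdef, ContinuousLinearMap.mul_apply]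
    by_cases hu : (u : ℝ) ∈ M.Ipart i
    · have hF : M.F i ↑u ∉ M.Ipart j := fun h => hcond ⟨hu, h⟩
      have huF : M.F i ↑u ∈ M.Rclass x := (MIM_class_apply hM hx u.2 hi hu).2
      rw [T_apply_pos i hi _ u ⟨M.F i ↑u, huF⟩ hu rfl]
      exact P_apply_neg j hj _ ⟨M.F i ↑u, huF⟩ hF
    · exact T_apply_neg i hi _ u hu
  have hPiD : (T i * star (T i)) * (S * star S) = S * star S := by
    refine ContinuousLinearMap.ext fun v => ?_
    refine lp.ext (funext fun u => ?_)
    rw [ContinuousLinearMap.mul_apply]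
    by_cases hu : (u : ℝ) ∈ M.Ipart i
    · rw [P_apply_pos i hi _ u hu]
    · rw [P_apply_neg i hi _ u hu, hD_neg v u (fun h => hu h.1)]
  have hDPi : (S * star S) * (T i * star (T i)) = S * star S := by
    refine ContinuousLinearMap.ext fun v => ?_
    refine lp.ext (funext fun u => ?_)
    rw [ContinuousLinearMap.mul_apply]
    by_cases hcond : (u : ℝ) ∈ M.Ipart i ∧ M.F i ↑u ∈ M.Ipart j
    · rw [hD_pos _ u hcond.1 hcond.2, hD_pos v u hcond.1 hcond.2,
        P_apply_pos i hi v u hcond.1]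
    · rw [hD_neg _ u hcond, hD_neg v u hcond]
  have hDD : (S * star S) * (S * star S) = S * star S := by
    refine ContinuousLinearMap.ext fun v => ?_
    refine lp.ext (funext fun u => ?_)
    rw [ContinuousLinearMap.mul_apply]
    by_cases hcond : (u : ℝ) ∈ M.Ipart i ∧ M.F i ↑u ∈ M.Ipart j
    · rw [hD_pos _ u hcond.1 hcond.2, hD_pos v u hcond.1 hcond.2]
    · rw [hD_neg _ u hcond, hD_neg v u hcond]
  refine ⟨?_, ?_, hc, ?_⟩
  · -- S ≠ 0
    obtain ⟨u0, hu0c, hu0I⟩ := MIM_exists_class_in_Ipart hM hx hj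
    obtain ⟨w, hwI, hFw⟩ := class_in_image ⟨u0, hu0c⟩ hu0I
    have hwc : w ∈ M.Rclass x := (MIM_class_preimage hM hx hu0c hi hwI hFw).1
    intro h0
    have hval : (S (M.dvec ⟨u0, hu0c⟩)) ⟨w, hwc⟩ = 1 := by
      rw [hSdef, ContinuousLinearMap.mul_apply]
      rw [T_apply_pos i hi _ ⟨w, hwc⟩ ⟨u0, hu0c⟩ hwI hFw.symm]
      rw [P_apply_pos j hj _ ⟨u0, hu0c⟩ hu0I]
      exact dvec_apply_self ⟨u0, hu0c⟩
    rw [h0, ContinuousLinearMap.zero_apply, zero_apply ⟨w, hwc⟩] at hval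
    exact zero_ne_one hval
  · -- partial isometry identity
    rw [mul_assoc, hc, hSdef, mul_assoc, hPj_idem]
  · -- positivity of P_i - S S*
    have hEsa : IsSelfAdjoint (T i * star (T i) - S * star S) := by
      have : star (T i * star (T i) - S * star S) = T i * star (T i) - S * star S := by
        rw [star_sub, star_mul, star_star, star_mul, star_star]
      exact this
    have hEE : (T i * star (T i) - S * star S) * (T i * star (T i) - S * star S) =
        T i * star (T i) - S * star S := by
      rw [mul_sub, sub_mul, sub_mul, hPi_idem, hPiD, hDPi, hDD, sub_self, sub_zero]
    refine ⟨ContinuousLinearMap.isSelfAdjoint_iff_isSymmetric.mp hEsa, fun v => ?_⟩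
    rw [ContinuousLinearMap.reApplyInnerSelf_apply]
    have h1 : (T i * star (T i) - S * star S) v =
        (T i * star (T i) - S * star S) ((T i * star (T i) - S * star S) v) := by
      rw [← ContinuousLinearMap.mul_apply, hEE]
    rw [h1]
    have h2 : ∀ w : M.Hsp x, (inner ℂ ((T i * star (T i) - S * star S) w) v : ℂ) =
        inner ℂ w ((T i * star (T i) - S * star S) v) := by
      intro w
      conv_lhs => rw [← hEsa.star_eq, ContinuousLinearMap.star_eq_adjoint]
      exact ContinuousLinearMap.adjoint_inner_left _ v w
    rw [h2 ((T i * star (T i) - S * star S) v)]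
    exact inner_self_nonneg
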